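/- Let K be an algebraically closed field, f, g ∈ K[[x_1,...,x_n]] with ord(f) = s ≥ 2 and τ(f) < ∞. If the k-th Tjurina algebras T_k(f) and T_k(g) are isomorphic as K-algebras for some k with m^{⌊(k+2s)/2⌋} ⊆ m⟨f⟩ + m^2 j(f), then f and g are contact equivalent. (Assuming the BGM finite determinacy theorem and the lifting lemma for isomorphisms of quotients of power series rings.) -/

import Mathlib

noncomputable section

/-- The formal power series ring `K[[x_1,...,x_n]]`. -/
abbrev PS (K : Type*) [Field K] (n : ℕ) := MvPowerSeries (Fin n) K

/-- The maximal ideal `m` of `K[[x]]` (power series with zero constant term). -/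
def mx (K : Type*) [Field K] (n : ℕ) : Ideal (PS K n) :=
  RingHom.ker (MvPowerSeries.constantCoeff : PS K n →+* K)

/-- The `i`-th formal partial derivative of a power series. -/
def pd {K : Type*} [Field K] {n : ℕ} (i : Fin n) (f : PS K n) : PS K n :=
  fun e => (e i + 1 : ℕ) • MvPowerSeries.coeff (e + Finsupp.single i 1) f

/-- The Jacobian ideal `j(f) = ⟨∂f/∂x_1, ..., ∂f/∂x_n⟩`. -/
def jId {K : Type*} [Field K] {n : ℕ} (f : PS K n) : Ideal (PS K n) :=
  Ideal.span (Set.range fun i => pd i f)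

/-- The Tjurina ideal `tj(f) = ⟨f⟩ + j(f)`. -/
def tjId {K : Type*} [Field K] {n : ℕ} (f : PS K n) : Ideal (PS K n) :=
  Ideal.span {f} ⊔ jId f

/-- The ideal defining the `k`-th Tjurina algebra: `⟨f, m^k j(f)⟩`. -/
def TkId {K : Type*} [Field K] {n : ℕ} (k : ℕ) (f : PS K n) : Ideal (PS K n) :=
  Ideal.span {f} ⊔ (mx K n) ^ k * jId f

/-- The ideal defining the `k`-th Milnor algebra: `m^k j(f)`. -/
def MkId {K : Type*} [Field K] {n : ℕ} (k : ℕ) (f : PS K n) : Ideal (PS K n) :=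
  (mx K n) ^ k * jId f

/-- Contact equivalence: `g = u · φ(f)`. -/
def ContactEquiv {K : Type*} [Field K] {n : ℕ} (f g : PS K n) : Prop :=
  ∃ (φ : PS K n ≃ₐ[K] PS K n) (u : (PS K n)ˣ), g = (u : PS K n) * φ f

/-- Right equivalence: `g = φ(f)`. -/
def RightEquiv {K : Type*} [Field K] {n : ℕ} (f g : PS K n) : Prop :=
  ∃ φ : PS K n ≃ₐ[K] PS K n, g = φ f

/-- `f` is contact `N`-determined. -/
def ContactDetermined {K : Type*} [Field K] {n : ℕ} (N : ℕ) (f : PS K n) : Prop :=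
  ∀ g : PS K n, g - f ∈ (mx K n) ^ (N + 1) → ContactEquiv f g

/-- `f` is right `N`-determined. -/
def RightDetermined {K : Type*} [Field K] {n : ℕ} (N : ℕ) (f : PS K n) : Prop :=
  ∀ g : PS K n, g - f ∈ (mx K n) ^ (N + 1) → RightEquiv f g

namespace Stmt8Aux

open MvPowerSeries Finsupp

variable {K : Type*} [Field K] {n : ℕ}

/-- total degree of an exponent -/
def deg {n : ℕ} (e : Fin n →₀ ℕ) : ℕ := ∑ i, e i

lemma deg_add (a b : Fin n →₀ ℕ) : deg (a + b) = deg a + deg b := by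
  simp [deg, Finsupp.add_apply, Finset.sum_add_distrib]

lemma deg_eq_zero_iff (e : Fin n →₀ ℕ) : deg e = 0 ↔ e = 0 := by
  constructor
  · intro h
    ext i
    have := Finset.sum_eq_zero_iff.mp h i (Finset.mem_univ i)
    simpa using this
  · rintro rfl; simp [deg]

lemma deg_single (i : Fin n) (m : ℕ) : deg (Finsupp.single i m) = m := by
  classical
  simp [deg, Finsupp.single_apply]

lemma mem_mx {f : PS K n} : f ∈ mx K n ↔ MvPowerSeries.constantCoeff f = 0 :=
  RingHom.mem_ker

/-- the ideal of power series of order at least `t` -/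
def ordI (K : Type*) [Field K] (n t : ℕ) : Ideal (PS K n) where
  carrier := {f | ∀ e : Fin n →₀ ℕ, deg e < t → MvPowerSeries.coeff e f = 0}
  zero_mem' := fun _ _ => map_zero _
  add_mem' := fun {a b} ha hb e he => by rw [map_add, ha e he, hb e he, add_zero]
  smul_mem' := fun c f hf e he => by
    classical
    rw [smul_eq_mul, MvPowerSeries.coeff_mul]
    refine Finset.sum_eq_zero fun p hp => ?_
    rw [Finset.HasAntidiagonal.mem_antidiagonal] at hp
    have h2 : deg p.1 + deg p.2 = deg e := by rw [← deg_add, hp]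
    rw [hf p.2 (by omega), mul_zero]

lemma mem_ordI {t : ℕ} {f : PS K n} :
    f ∈ ordI K n t ↔ ∀ e : Fin n →₀ ℕ, deg e < t → MvPowerSeries.coeff e f = 0 :=
  Iff.rfl

lemma mx_pow_le_ordI (t : ℕ) : (mx K n) ^ t ≤ ordI K n t := by
  induction t with
  | zero => exact fun f _ e he => absurd he (Nat.not_lt_zero _)
  | succ t ih =>
    rw [pow_succ]
    refine Ideal.mul_le.mpr fun a ha b hb => ?_
    intro e he
    classical
    rw [MvPowerSeries.coeff_mul]
    refine Finset.sum_eq_zero fun p hp => ?_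
    rw [Finset.HasAntidiagonal.mem_antidiagonal] at hp
    have h2 : deg p.1 + deg p.2 = deg e := by rw [← deg_add, hp]
    by_cases h0 : p.2 = 0
    · rw [h0, MvPowerSeries.coeff_zero_eq_constantCoeff, mem_mx.mp hb, mul_zero]
    · have : deg p.2 ≠ 0 := fun h => h0 ((deg_eq_zero_iff _).mp h)
      rw [ih ha p.1 (by omega), zero_mul]

lemma ordI_le_mx_pow (t : ℕ) : ordI K n t ≤ (mx K n) ^ t := by
  classical
  induction t with
  | zero => exact fun f _ => by simp
  | succ t ih =>
    intro f hf
    set g : Fin n → PS K n := fun i e =>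
      if ∀ j : Fin n, j < i → e j = 0 then MvPowerSeries.coeff (e + Finsupp.single i 1) f
      else 0 with hgdef
    have hgord : ∀ i, g i ∈ ordI K n t := by
      intro i e he
      rw [MvPowerSeries.coeff_apply]
      simp only [hgdef]
      split
      · refine hf _ ?_
        rw [deg_add, deg_single]
        omega
      · rfl
    have hXg : ∀ i, (MvPowerSeries.X i : PS K n) * g i ∈ (mx K n) ^ (t + 1) := by
      intro i
      rw [pow_succ']
      refine Ideal.mul_mem_mul ?_ (ih (hgord i))
      rw [mem_mx, MvPowerSeries.constantCoeff_X]
    have hsum : f = ∑ i : Fin n, (MvPowerSeries.X i : PS K n) * g i := by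
      ext e
      rw [map_sum]
      have hterm : ∀ i : Fin n, MvPowerSeries.coeff e ((MvPowerSeries.X i : PS K n) * g i)
          = if Finsupp.single i 1 ≤ e then
              MvPowerSeries.coeff (e - Finsupp.single i 1) (g i) else 0 := by
        intro i
        rw [MvPowerSeries.X_def, MvPowerSeries.coeff_monomial_mul]
        split <;> simp
      by_cases h0 : e = 0
      · subst h0
        rw [hf 0 (by simp [deg])]
        symm
        refine Finset.sum_eq_zero fun i _ => ?_
        rw [hterm i, if_neg]
        intro hle
        have := Finsupp.single_le_iff.mp hle
        simpa using this
      · have hsupp : e.support.Nonempty := Finsupp.support_nonempty_iff.mpr h0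
        set i₀ := e.support.min' hsupp with hi₀
        have hi₀mem : i₀ ∈ e.support := e.support.min'_mem hsupp
        have hi₀ne : e i₀ ≠ 0 := Finsupp.mem_support_iff.mp hi₀mem
        have hmin : ∀ j : Fin n, j < i₀ → e j = 0 := by
          intro j hj
          by_contra hne
          exact absurd (e.support.min'_le j (Finsupp.mem_support_iff.mpr hne)) (not_le.mpr hj)
        symm
        rw [Finset.sum_eq_single_of_mem i₀ (Finset.mem_univ i₀)]
        · rw [hterm i₀, if_pos (Finsupp.single_le_iff.mpr (Nat.one_le_iff_ne_zero.mpr hi₀ne))]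
          rw [MvPowerSeries.coeff_apply]
          simp only [hgdef]
          rw [if_pos, tsub_add_cancel_of_le
            (Finsupp.single_le_iff.mpr (Nat.one_le_iff_ne_zero.mpr hi₀ne))]
          intro j hj
          have hne : i₀ ≠ j := fun h => absurd (h ▸ hj) (lt_irrefl _)
          simp [Finsupp.tsub_apply, hmin j hj, Finsupp.single_apply, hne]
        · intro i _ hne
          rw [hterm i]
          split
          · rw [MvPowerSeries.coeff_apply]
            simp only [hgdef]
            rw [if_neg]
            intro hall
            rename_i hle
            have h1 : (1 : ℕ) ≤ e i := Finsupp.single_le_iff.mp hle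
            have hii : i₀ < i ∨ i < i₀ := hne.symm.lt_or_gt
            rcases hii with h | h
            · have := hall i₀ h
              rw [Finsupp.tsub_apply, Finsupp.single_apply, if_neg] at this
              · exact hi₀ne (by simpa using this)
              · exact fun hh => absurd (hh ▸ h) (lt_irrefl _)
            · exact absurd (hmin i h) (by omega)
          · rfl
    rw [hsum]
    exact Ideal.sum_mem _ fun i _ => hXg i

lemma pd_mem_ordI {t : ℕ} {f : PS K n} (hf : f ∈ ordI K n t) (i : Fin n) :
    pd i f ∈ ordI K n (t - 1) := by
  intro e he
  rw [MvPowerSeries.coeff_apply]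
  show (e i + 1 : ℕ) • MvPowerSeries.coeff (e + Finsupp.single i 1) f = 0
  rw [hf _ (by rw [deg_add, deg_single]; omega), smul_zero]

lemma jId_le {t : ℕ} {f : PS K n} (hf : f ∈ (mx K n) ^ t) : jId f ≤ (mx K n) ^ (t - 1) := by
  rw [jId, Ideal.span_le]
  rintro _ ⟨i, rfl⟩
  exact ordI_le_mx_pow _ (pd_mem_ordI (mx_pow_le_ordI t hf) i)

lemma isUnit_iff {f : PS K n} : IsUnit f ↔ MvPowerSeries.constantCoeff f ≠ 0 := by
  rw [MvPowerSeries.isUnit_iff_constantCoeff, isUnit_iff_ne_zero]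

lemma algEquiv_mem_mx (θ : PS K n ≃ₐ[K] PS K n) {x : PS K n} (hx : x ∈ mx K n) :
    θ x ∈ mx K n := by
  rw [mem_mx]
  by_contra h0
  have hu : IsUnit (θ x) := isUnit_iff.mpr h0
  have : IsUnit x := by
    have := hu.map θ.symm
    rwa [θ.symm_apply_apply] at this
  exact (isUnit_iff.mp this) (mem_mx.mp hx)

lemma map_mx (θ : PS K n ≃ₐ[K] PS K n) : Ideal.map θ (mx K n) = mx K n := by
  refine le_antisymm (Ideal.map_le_iff_le_comap.mpr fun x hx => algEquiv_mem_mx θ hx) ?_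
  intro x hx
  have : x = θ (θ.symm x) := (θ.apply_symm_apply x).symm
  rw [this]
  exact Ideal.mem_map_of_mem _ (algEquiv_mem_mx θ.symm hx)

lemma map_mx_pow (θ : PS K n ≃ₐ[K] PS K n) (t : ℕ) :
    Ideal.map θ ((mx K n) ^ t) = (mx K n) ^ t := by
  rw [Ideal.map_pow, map_mx]

lemma algEquiv_mem_pow (θ : PS K n ≃ₐ[K] PS K n) {t : ℕ} {x : PS K n}
    (hx : x ∈ (mx K n) ^ t) : θ x ∈ (mx K n) ^ t := by
  have : θ x ∈ Ideal.map θ ((mx K n) ^ t) := Ideal.mem_map_of_mem _ hx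
  rwa [map_mx_pow] at this

end Stmt8Aux

open Stmt8Aux

set_option maxHeartbeats 2000000 in
set_option synthInstance.maxHeartbeats 400000 in
/-- if `T_k(f) ≅ T_k(g)` as `K`-algebras for some `k` with
`m^{⌊(k+2s)/2⌋} ⊆ m⟨f⟩ + m^2 j(f)`, then `f` and `g` are contact equivalent
(assuming the lifting lemma and the BGM determinacy theorem). -/
theorem stmt_8 {K : Type*} [Field K] [IsAlgClosed K] {n : ℕ} (f g : PS K n)
    (s k : ℕ) (hs : 2 ≤ s)
    (hf : f ∈ (mx K n) ^ s) (hf' : f ∉ (mx K n) ^ (s + 1))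
    (htau : FiniteDimensional K (PS K n ⧸ tjId f))
    (hlift : ∀ I J : Ideal (PS K n), I ≤ mx K n → J ≤ mx K n →
      ∀ e : (PS K n ⧸ I) ≃ₐ[K] (PS K n ⧸ J),
        ∃ θ : PS K n ≃ₐ[K] PS K n, Ideal.map θ I = J ∧
          ∀ h : PS K n, Ideal.Quotient.mk J (θ h) = e (Ideal.Quotient.mk I h))
    (hBGM : ∀ l : ℕ, (mx K n) ^ (l + 2) ≤ mx K n * Ideal.span {f} + (mx K n) ^ 2 * jId f →
      ContactDetermined (2 * l - s + 2) f)
    (hsub : (mx K n) ^ ((k + 2 * s) / 2) ≤ mx K n * Ideal.span {f} + (mx K n) ^ 2 * jId f)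
    (hiso : Nonempty ((PS K n ⧸ TkId k f) ≃ₐ[K] (PS K n ⧸ TkId k g))) :
    ContactEquiv f g := by
  classical
  have hdiv : (k + 2 * s) / 2 = k / 2 + s := by
    rw [Nat.add_mul_div_left _ _ (by norm_num : (0:ℕ) < 2)]
  have hjf : jId f ≤ (mx K n) ^ (s - 1) := by
    have := jId_le hf
    simpa using this
  have hfm : Ideal.span {f} ≤ (mx K n) ^ s := by
    rw [Ideal.span_le, Set.singleton_subset_iff]; exact hf
  have hrhs : mx K n * Ideal.span {f} + (mx K n) ^ 2 * jId f ≤ (mx K n) ^ (s + 1) := by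
    rw [Ideal.add_eq_sup]
    apply sup_le
    · calc mx K n * Ideal.span {f} ≤ mx K n * (mx K n) ^ s := Ideal.mul_mono_right hfm
        _ = (mx K n) ^ (s + 1) := (pow_succ' _ _).symm
    · calc (mx K n) ^ 2 * jId f ≤ (mx K n) ^ 2 * (mx K n) ^ (s - 1) :=
          Ideal.mul_mono_right hjf
        _ = (mx K n) ^ (s + 1) := by rw [← pow_add]; congr 1; omega
  by_cases hk : k < 2
  · exfalso
    apply hf'
    have h0 : (k + 2 * s) / 2 = s := by omega
    have hsub' : (mx K n) ^ s ≤ mx K n * Ideal.span {f} + (mx K n) ^ 2 * jId f := by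
      rw [← h0]; exact hsub
    exact hrhs (hsub' hf)
  push_neg at hk
  obtain ⟨e⟩ := hiso
  -- the two ideals are proper
  have hIf : TkId k f ≤ mx K n := by
    rw [TkId]
    apply sup_le
    · refine le_trans hfm ?_
      calc (mx K n) ^ s ≤ (mx K n) ^ 1 := Ideal.pow_le_pow_right (by omega)
        _ = mx K n := pow_one _
    · refine le_trans Ideal.mul_le_left ?_
      calc (mx K n) ^ k ≤ (mx K n) ^ 1 := Ideal.pow_le_pow_right (by omega)
        _ = mx K n := pow_one _
  have h1f : (1 : PS K n) ∉ TkId k f := by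
    intro h
    have := mem_mx.mp (hIf h)
    simp at this
  have h1g : (1 : PS K n) ∉ TkId k g := by
    intro h1
    apply h1f
    have hq1 : (Ideal.Quotient.mk (TkId k g)) 1 = 0 := Ideal.Quotient.eq_zero_iff_mem.mpr h1
    have : (Ideal.Quotient.mk (TkId k f)) 1 = 0 := by
      calc (Ideal.Quotient.mk (TkId k f)) 1 = 1 := map_one _
        _ = e.symm 1 := (map_one e.symm).symm
        _ = e.symm ((Ideal.Quotient.mk (TkId k g)) 1) := by rw [map_one (Ideal.Quotient.mk _)]
        _ = e.symm 0 := by rw [hq1]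
        _ = 0 := map_zero _
    exact Ideal.Quotient.eq_zero_iff_mem.mp this
  have hIg : TkId k g ≤ mx K n := by
    intro x hx
    rw [mem_mx]
    by_contra h0
    exact h1g ((Ideal.eq_top_iff_one _).mp (Ideal.eq_top_of_isUnit_mem _ hx (isUnit_iff.mpr h0)))
  obtain ⟨θ, hθmap, -⟩ := hlift _ _ hIf hIg e
  have hmapT : Ideal.map θ (TkId k f)
      = Ideal.span {θ f} ⊔ (mx K n) ^ k * Ideal.map θ (jId f) := by
    rw [TkId, Ideal.map_sup, Ideal.map_mul, Ideal.map_pow, map_mx θ, Ideal.map_span,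
      Set.image_singleton]
  have hJθ : Ideal.map θ (jId f) ≤ (mx K n) ^ (s - 1) := by
    calc Ideal.map θ (jId f) ≤ Ideal.map θ ((mx K n) ^ (s - 1)) := Ideal.map_mono hjf
      _ = (mx K n) ^ (s - 1) := map_mx_pow θ _
  have hgI : g ∈ Ideal.span {θ f} ⊔ (mx K n) ^ k * Ideal.map θ (jId f) := by
    rw [← hmapT, hθmap, TkId]
    exact Ideal.mem_sup_left (Ideal.subset_span rfl)
  obtain ⟨y, hy, z, hz, hyz⟩ := Submodule.mem_sup.mp hgI
  obtain ⟨a, ha⟩ := Ideal.mem_span_singleton'.mp hy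
  have hzmem : z ∈ (mx K n) ^ (k + s - 1) := by
    have h2 : (mx K n) ^ k * Ideal.map θ (jId f) ≤ (mx K n) ^ (k + (s - 1)) := by
      rw [pow_add]; exact Ideal.mul_mono_right hJθ
    have h3 : k + (s - 1) = k + s - 1 := by omega
    exact h3 ▸ h2 hz
  have hθf : θ f ∈ (mx K n) ^ s := algEquiv_mem_pow θ hf
  have hθf' : θ f ∉ (mx K n) ^ (s + 1) := by
    intro h
    apply hf'
    have := algEquiv_mem_pow θ.symm h
    rwa [θ.symm_apply_apply] at this
  have hg' : g ∉ (mx K n) ^ (s + 1) := by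
    intro hgm
    apply hθf'
    have hθfg : θ f ∈ TkId k g := by
      rw [← hθmap]
      exact Ideal.mem_map_of_mem _ (Ideal.mem_sup_left (Ideal.subset_span rfl))
    have hle : TkId k g ≤ (mx K n) ^ (s + 1) := by
      rw [TkId]
      apply sup_le
      · rw [Ideal.span_le, Set.singleton_subset_iff]; exact hgm
      · have hjg : jId g ≤ (mx K n) ^ s := by
          have := jId_le hgm
          simpa using this
        calc (mx K n) ^ k * jId g ≤ (mx K n) ^ k * (mx K n) ^ s := Ideal.mul_mono_right hjg
          _ = (mx K n) ^ (k + s) := (pow_add _ _ _).symm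
          _ ≤ (mx K n) ^ (s + 1) := Ideal.pow_le_pow_right (by omega)
    exact hle hθfg
  have hau : IsUnit a := by
    rw [isUnit_iff]
    intro h0
    apply hg'
    have h1 : a * θ f ∈ (mx K n) ^ (s + 1) := by
      rw [pow_succ']
      exact Ideal.mul_mem_mul (mem_mx.mpr h0) hθf
    have h2 : z ∈ (mx K n) ^ (s + 1) := Ideal.pow_le_pow_right (by omega) hzmem
    rw [← hyz, ← ha]
    exact Ideal.add_mem _ h1 h2
  -- determinacy
  have hdet : ContactDetermined (2 * (k / 2 + s - 2) - s + 2) f := by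
    apply hBGM
    have he2 : k / 2 + s - 2 + 2 = (k + 2 * s) / 2 := by rw [hdiv]; omega
    rw [he2]; exact hsub
  have hN : 2 * (k / 2 + s - 2) - s + 2 + 1 ≤ k + s - 1 := by omega
  obtain ⟨ua, hua⟩ := hau
  set g' := θ.symm ((↑ua⁻¹ : PS K n) * g) with hg'def
  have hstep : g' - f ∈ (mx K n) ^ (2 * (k / 2 + s - 2) - s + 2 + 1) := by
    have key : (↑ua⁻¹ : PS K n) * g - θ f = (↑ua⁻¹ : PS K n) * z := by
      rw [← hyz, ← ha, ← hua, mul_add, ← mul_assoc, Units.inv_mul, one_mul,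
        add_sub_cancel_left]
    have hdiff : g' - f = θ.symm ((↑ua⁻¹ : PS K n) * g - θ f) := by
      rw [map_sub, hg'def, θ.symm_apply_apply]
    rw [hdiff, key]
    refine algEquiv_mem_pow θ.symm ?_
    exact Ideal.pow_le_pow_right hN (Ideal.mul_mem_left _ _ hzmem)
  obtain ⟨φ, u, hu⟩ := hdet g' hstep
  have hθg' : θ g' = (↑ua⁻¹ : PS K n) * g := by rw [hg'def, θ.apply_symm_apply]
  have hUnit : IsUnit ((↑ua : PS K n) * θ ↑u) := ua.isUnit.mul (u.isUnit.map θ)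
  obtain ⟨w, hw⟩ := hUnit
  refine ⟨φ.trans θ, w, ?_⟩
  have hgeq : g = (↑ua : PS K n) * θ g' := by
    rw [hθg', ← mul_assoc, Units.mul_inv, one_mul]
  rw [hw, AlgEquiv.trans_apply, hgeq, hu, map_mul, mul_assoc]
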